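/- Let $P_0 : [0,T] \to \mathbb{R}^{2n\times 2n}$ and $P_1 : [0,T] \to \mathbb{R}^{3n\times 3n}$ be symmetric-matrix-valued solutions of the NCE Riccati system for homogeneous minor players (equations (33) of the paper), with block decompositions $P_0 = \begin{pmatrix}\Phi_1^0 & \Phi_2^0\\ \Phi_2^{0T} & \Phi_3^0\end{pmatrix}$ and $P_1 = \begin{pmatrix}\Phi_1 & \Phi_a^T & \Phi_2\\ \Phi_a & \Phi_0 & \Phi_b\\ \Phi_2^T & \Phi_b^T & \Phi_3\end{pmatrix}$ into $n\times n$ blocks. Then the nine block functions $(\Phi_1^0, \Phi_2^0, \Phi_3^0, \Phi_0, \Phi_1, \Phi_2, \Phi_3, \Phi_a, \Phi_b)$ satisfy the coupled system of nine $n\times n$ matrix ODEs (37) with the corresponding terminal conditions $\Phi_1^0(T)=Q_{0f}$, $\Phi_2^0(T)=-Q_{0f}\Gamma_{0f}$, $\Phi_3^0(T)=\Gamma_{0f}^TQ_{0f}\Gamma_{0f}$, $\Phi_0(T)=\Gamma_{1f}^TQ_f\Gamma_{1f}$, $\Phi_1(T)=Q_f$, $\Phi_2(T)=-Q_f\Gamma_{2f}$,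 $\Phi_3(T)=\Gamma_{2f}^TQ_f\Gamma_{2f}$, $\Phi_a(T)=-\Gamma_{1f}^TQ_f$, $\Phi_b(T)=\Gamma_{1f}^TQ_f\Gamma_{2f}$. -/

import Mathlib

open Set Matrix

namespace Hom

noncomputable section

variable {n n1 : ℕ}

/-- Blocks of `P₀ = [[Φ₁⁰, Φ₂⁰], [Φ₂⁰ᵀ, Φ₃⁰]]`. -/
def Φ10 (P : Matrix (Fin n ⊕ Fin n) (Fin n ⊕ Fin n) ℝ) : Matrix (Fin n) (Fin n) ℝ :=
  Matrix.of fun i j => P (Sum.inl i) (Sum.inl j)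

def Φ20 (P : Matrix (Fin n ⊕ Fin n) (Fin n ⊕ Fin n) ℝ) : Matrix (Fin n) (Fin n) ℝ :=
  Matrix.of fun i j => P (Sum.inl i) (Sum.inr j)

def Φ30 (P : Matrix (Fin n ⊕ Fin n) (Fin n ⊕ Fin n) ℝ) : Matrix (Fin n) (Fin n) ℝ :=
  Matrix.of fun i j => P (Sum.inr i) (Sum.inr j)

/-- Blocks of `P₁ = [[Φ₁, Φₐᵀ, Φ₂], [Φₐ, Φ₀, Φ_b], [Φ₂ᵀ, Φ_bᵀ, Φ₃]]`. -/
def Φ1 (P : Matrix (Fin n ⊕ (Fin n ⊕ Fin n)) (Fin n ⊕ (Fin n ⊕ Fin n)) ℝ) :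
    Matrix (Fin n) (Fin n) ℝ :=
  Matrix.of fun i j => P (Sum.inl i) (Sum.inl j)

def Φa (P : Matrix (Fin n ⊕ (Fin n ⊕ Fin n)) (Fin n ⊕ (Fin n ⊕ Fin n)) ℝ) :
    Matrix (Fin n) (Fin n) ℝ :=
  Matrix.of fun i j => P (Sum.inr (Sum.inl i)) (Sum.inl j)

def Φ2 (P : Matrix (Fin n ⊕ (Fin n ⊕ Fin n)) (Fin n ⊕ (Fin n ⊕ Fin n)) ℝ) :
    Matrix (Fin n) (Fin n) ℝ :=
  Matrix.of fun i j => P (Sum.inl i) (Sum.inr (Sum.inr j))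

def Φ0 (P : Matrix (Fin n ⊕ (Fin n ⊕ Fin n)) (Fin n ⊕ (Fin n ⊕ Fin n)) ℝ) :
    Matrix (Fin n) (Fin n) ℝ :=
  Matrix.of fun i j => P (Sum.inr (Sum.inl i)) (Sum.inr (Sum.inl j))

def Φb (P : Matrix (Fin n ⊕ (Fin n ⊕ Fin n)) (Fin n ⊕ (Fin n ⊕ Fin n)) ℝ) :
    Matrix (Fin n) (Fin n) ℝ :=
  Matrix.of fun i j => P (Sum.inr (Sum.inl i)) (Sum.inr (Sum.inr j))

def Φ3 (P : Matrix (Fin n ⊕ (Fin n ⊕ Fin n)) (Fin n ⊕ (Fin n ⊕ Fin n)) ℝ) :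
    Matrix (Fin n) (Fin n) ℝ :=
  Matrix.of fun i j => P (Sum.inr (Sum.inr i)) (Sum.inr (Sum.inr j))

/-- `𝔸₀ = [[A₀, F₀], [Ḡ, Ā]]` with `Ḡ = G - MΦₐᵀ`,
`Ā = A + F - M(Φ₁ + Φ₂)` expressed via the blocks of `P₁`. -/
def A0big (A0 F0 G A F M : Matrix (Fin n) (Fin n) ℝ)
    (P1 : Matrix (Fin n ⊕ (Fin n ⊕ Fin n)) (Fin n ⊕ (Fin n ⊕ Fin n)) ℝ) :
    Matrix (Fin n ⊕ Fin n) (Fin n ⊕ Fin n) ℝ :=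
  fromBlocks A0 F0 (G - M * (Φa P1)ᵀ) (A + F - M * (Φ1 P1 + Φ2 P1))

/-- `𝔸 = [[A, [G F]], [0, 𝔸₀ - 𝔹₀R₀⁻¹𝔹₀ᵀP₀]]`. -/
def Abig (A0 F0 G A F M : Matrix (Fin n) (Fin n) ℝ)
    (B0 : Matrix (Fin n) (Fin n1) ℝ) (R0 : Matrix (Fin n1) (Fin n1) ℝ)
    (P0 : Matrix (Fin n ⊕ Fin n) (Fin n ⊕ Fin n) ℝ)
    (P1 : Matrix (Fin n ⊕ (Fin n ⊕ Fin n)) (Fin n ⊕ (Fin n ⊕ Fin n)) ℝ) :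
    Matrix (Fin n ⊕ (Fin n ⊕ Fin n)) (Fin n ⊕ (Fin n ⊕ Fin n)) ℝ :=
  fromBlocks A (fromCols G F) 0
    (A0big A0 F0 G A F M P1 -
      fromRows B0 (0 : Matrix (Fin n) (Fin n1) ℝ) * R0⁻¹ *
        (fromRows B0 (0 : Matrix (Fin n) (Fin n1) ℝ))ᵀ * P0)

end

end Hom

open Hom

namespace Hom
noncomputable section
variable {n n1 : ℕ}

@[simp] lemma Φ10_fb (a b : Matrix (Fin n) (Fin n) ℝ) (c d : Matrix (Fin n) (Fin n) ℝ) :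
    Φ10 (fromBlocks a b c d) = a := rfl
@[simp] lemma Φ20_fb (a b c d : Matrix (Fin n) (Fin n) ℝ) :
    Φ20 (fromBlocks a b c d) = b := rfl
@[simp] lemma Φ30_fb (a b c d : Matrix (Fin n) (Fin n) ℝ) :
    Φ30 (fromBlocks a b c d) = d := rfl

@[simp] lemma Φ1_fb (a : Matrix (Fin n) (Fin n) ℝ) (b : Matrix (Fin n) (Fin n ⊕ Fin n) ℝ)
    (c : Matrix (Fin n ⊕ Fin n) (Fin n) ℝ) (d : Matrix (Fin n ⊕ Fin n) (Fin n ⊕ Fin n) ℝ) :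
    Φ1 (fromBlocks a b c d) = a := rfl
@[simp] lemma Φ2_fb (a x y : Matrix (Fin n) (Fin n) ℝ)
    (c : Matrix (Fin n ⊕ Fin n) (Fin n) ℝ) (d : Matrix (Fin n ⊕ Fin n) (Fin n ⊕ Fin n) ℝ) :
    Φ2 (fromBlocks a (fromCols x y) c d) = y := rfl
@[simp] lemma Φa_fb (a : Matrix (Fin n) (Fin n) ℝ) (b : Matrix (Fin n) (Fin n ⊕ Fin n) ℝ)
    (u v : Matrix (Fin n) (Fin n) ℝ) (d : Matrix (Fin n ⊕ Fin n) (Fin n ⊕ Fin n) ℝ) :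
    Φa (fromBlocks a b (fromRows u v) d) = u := rfl
@[simp] lemma Φ0_fb (a : Matrix (Fin n) (Fin n) ℝ) (b : Matrix (Fin n) (Fin n ⊕ Fin n) ℝ)
    (c : Matrix (Fin n ⊕ Fin n) (Fin n) ℝ) (q r s w : Matrix (Fin n) (Fin n) ℝ) :
    Φ0 (fromBlocks a b c (fromBlocks q r s w)) = q := rfl
@[simp] lemma Φb_fb (a : Matrix (Fin n) (Fin n) ℝ) (b : Matrix (Fin n) (Fin n ⊕ Fin n) ℝ)
    (c : Matrix (Fin n ⊕ Fin n) (Fin n) ℝ) (q r s w : Matrix (Fin n) (Fin n) ℝ) :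
    Φb (fromBlocks a b c (fromBlocks q r s w)) = r := rfl
@[simp] lemma Φ3_fb (a : Matrix (Fin n) (Fin n) ℝ) (b : Matrix (Fin n) (Fin n ⊕ Fin n) ℝ)
    (c : Matrix (Fin n ⊕ Fin n) (Fin n) ℝ) (q r s w : Matrix (Fin n) (Fin n) ℝ) :
    Φ3 (fromBlocks a b c (fromBlocks q r s w)) = w := rfl

section blockalg
variable {α m₁ m₂ nn n₁ n₂ : Type*}

@[simp] lemma fromBlocks_sub [Sub α] (a : Matrix m₁ n₁ α) (b : Matrix m₁ n₂ α)
    (c : Matrix m₂ n₁ α) (d : Matrix m₂ n₂ α) (a' b' c' d') :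
    fromBlocks a b c d - fromBlocks a' b' c' d' =
      fromBlocks (a - a') (b - b') (c - c') (d - d') := by
  ext (i | i) (j | j) <;> rfl

@[simp] lemma fromColumns_add [Add α] (a : Matrix nn n₁ α) (b : Matrix nn n₂ α) (a' b') :
    fromCols a b + fromCols a' b' = fromCols (a + a') (b + b') := by
  ext i (j | j) <;> rfl

@[simp] lemma fromRows_add [Add α] (a : Matrix m₁ nn α) (b : Matrix m₂ nn α) (a' b') :
    fromRows a b + fromRows a' b' = fromRows (a + a') (b + b') := by
  ext (i | i) j <;> rfl

@[simp] lemma fromColumns_sub [Sub α] (a : Matrix nn n₁ α) (b : Matrix nn n₂ α) (a' b') :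
    fromCols a b - fromCols a' b' = fromCols (a - a') (b - b') := by
  ext i (j | j) <;> rfl

@[simp] lemma fromRows_sub [Sub α] (a : Matrix m₁ nn α) (b : Matrix m₂ nn α) (a' b') :
    fromRows a b - fromRows a' b' = fromRows (a - a') (b - b') := by
  ext (i | i) j <;> rfl

@[simp] lemma smul_fromColumns {R : Type*} [SMul R α] (x : R) (a : Matrix nn n₁ α)
    (b : Matrix nn n₂ α) : x • fromCols a b = fromCols (x • a) (x • b) := by
  ext i (j | j) <;> rfl

@[simp] lemma smul_fromRows {R : Type*} [SMul R α] (x : R) (a : Matrix m₁ nn α)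
    (b : Matrix m₂ nn α) : x • fromRows a b = fromRows (x • a) (x • b) := by
  ext (i | i) j <;> rfl

@[simp] lemma reshape1 [Zero α] (a : Matrix m₁ n₁ α) (b : Matrix m₂ n₁ α)
    {n₃ : Type*} (q : Matrix m₁ n₂ α) (r : Matrix m₁ n₃ α) (s : Matrix m₂ n₂ α)
    (t : Matrix m₂ n₃ α) :
    fromCols (fromRows a b) (fromBlocks q r s t) =
      fromBlocks a (fromCols q r) b (fromCols s t) := by
  ext (i | i) (j | j | j) <;> rfl

@[simp] lemma reshape2 [Zero α] {m₃ : Type*} (a : Matrix m₁ n₁ α) (b : Matrix m₁ n₂ α)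
    (q : Matrix m₂ n₁ α) (r : Matrix m₂ n₂ α) (s : Matrix m₃ n₁ α) (t : Matrix m₃ n₂ α) :
    fromRows (fromCols a b) (fromBlocks q r s t) =
      fromBlocks a b (fromRows q s) (fromRows r t) := by
  ext (i | i | i) (j | j) <;> rfl

@[simp] lemma fromRows_fromColumns_zero [Zero α] (u : Matrix m₁ n₁ α) (v : Matrix m₁ n₂ α) :
    fromRows (fromCols u v) (0 : Matrix m₂ (n₁ ⊕ n₂) α) = fromBlocks u v 0 0 := by
  ext (i | i) (j | j) <;> rfl

end blockalg

lemma herm_t {m : Type*} {A : Matrix m m ℝ} (h : A.IsHermitian) : Aᵀ = A := by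
  ext i j
  simpa using h.apply i j

lemma decomp0 (P : Matrix (Fin n ⊕ Fin n) (Fin n ⊕ Fin n) ℝ) (h : P.IsHermitian) :
    P = fromBlocks (Φ10 P) (Φ20 P) (Φ20 P)ᵀ (Φ30 P) := by
  have hs : ∀ x y, P x y = P y x := fun x y => ((star_trivial _).symm.trans (h.apply y x))
  ext (i | i) (j | j)
  · rfl
  · rfl
  · exact hs _ _
  · rfl

lemma decomp1 (P : Matrix (Fin n ⊕ (Fin n ⊕ Fin n)) (Fin n ⊕ (Fin n ⊕ Fin n)) ℝ)
    (h : P.IsHermitian) :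
    P = fromBlocks (Φ1 P) (fromCols (Φa P)ᵀ (Φ2 P)) (fromRows (Φa P) (Φ2 P)ᵀ)
        (fromBlocks (Φ0 P) (Φb P) (Φb P)ᵀ (Φ3 P)) := by
  have hs : ∀ x y, P x y = P y x := fun x y => ((star_trivial _).symm.trans (h.apply y x))
  ext (i | i | i) (j | j | j)
  · rfl
  · exact hs _ _
  · rfl
  · rfl
  · rfl
  · rfl
  · exact hs _ _
  · exact hs _ _
  · rfl

lemma sym10 {P : Matrix (Fin n ⊕ Fin n) (Fin n ⊕ Fin n) ℝ} (h : P.IsHermitian) :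
    (Φ10 P)ᵀ = Φ10 P := by
  ext i j; exact ((star_trivial _).symm.trans (h.apply _ _))

lemma quad0 (Γ Q : Matrix (Fin n) (Fin n) ℝ) :
    (fromCols 1 (-Γ))ᵀ * Q * fromCols 1 (-Γ) =
      fromBlocks Q (-(Q * Γ)) (-(Γᵀ * Q)) (Γᵀ * Q * Γ) := by
  simp [transpose_fromCols, fromRows_mul, fromRows_mul_fromCols, Matrix.neg_mul,
    Matrix.mul_neg]

lemma quad1 (Γ1 Γ2 Q : Matrix (Fin n) (Fin n) ℝ) :
    (fromCols 1 (fromCols (-Γ1) (-Γ2)))ᵀ * Q * fromCols 1 (fromCols (-Γ1) (-Γ2)) =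
      fromBlocks Q (fromCols (-(Q * Γ1)) (-(Q * Γ2)))
        (fromRows (-(Γ1ᵀ * Q)) (-(Γ2ᵀ * Q)))
        (fromBlocks (Γ1ᵀ * Q * Γ1) (Γ1ᵀ * Q * Γ2) (Γ2ᵀ * Q * Γ1) (Γ2ᵀ * Q * Γ2)) := by
  simp [transpose_fromCols, transpose_fromRows, fromRows_mul, fromRows_mul_fromCols,
    mul_fromCols, Matrix.neg_mul, Matrix.mul_neg]
  try ext (i | i | i) (j | j | j) <;> rfl

lemma key0 (ρ : ℝ) (A0 A F0 F G Γ0 Q0 : Matrix (Fin n) (Fin n) ℝ)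
    (B0 B : Matrix (Fin n) (Fin n1) ℝ) (R0i Ri : Matrix (Fin n1) (Fin n1) ℝ)
    (hRi : Riᵀ = Ri)
    (P0m : Matrix (Fin n ⊕ Fin n) (Fin n ⊕ Fin n) ℝ) (h0 : P0m.IsHermitian)
    (P1m : Matrix (Fin n ⊕ (Fin n ⊕ Fin n)) (Fin n ⊕ (Fin n ⊕ Fin n)) ℝ) :
    ρ • P0m - (P0m * A0big A0 F0 G A F (B * Ri * Bᵀ) P1m
        + (A0big A0 F0 G A F (B * Ri * Bᵀ) P1m)ᵀ * P0m
        - P0m * fromRows B0 (0 : Matrix (Fin n) (Fin n1) ℝ) * R0i *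
            (fromRows B0 (0 : Matrix (Fin n) (Fin n1) ℝ))ᵀ * P0m
        + (fromCols 1 (-Γ0))ᵀ * Q0 * fromCols 1 (-Γ0))
    = fromBlocks
      (ρ • Φ10 P0m - (Φ10 P0m * A0 + A0ᵀ * Φ10 P0m
        + Φ20 P0m * (G - (B * Ri * Bᵀ) * (Φa P1m)ᵀ)
        + (Gᵀ - Φa P1m * (B * Ri * Bᵀ)) * (Φ20 P0m)ᵀ
        - Φ10 P0m * (B0 * R0i * B0ᵀ) * Φ10 P0m + Q0))
      (ρ • Φ20 P0m - (Φ10 P0m * F0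
        + Φ20 P0m * (A + F - (B * Ri * Bᵀ) * (Φ1 P1m + Φ2 P1m))
        + A0ᵀ * Φ20 P0m
        - (Φa P1m * (B * Ri * Bᵀ) - Gᵀ) * Φ30 P0m
        - Φ10 P0m * (B0 * R0i * B0ᵀ) * Φ20 P0m - Q0 * Γ0))
      (ρ • (Φ20 P0m)ᵀ - ((Φ20 P0m)ᵀ * A0
        + Φ30 P0m * (G - (B * Ri * Bᵀ) * (Φa P1m)ᵀ)
        + F0ᵀ * Φ10 P0m
        + (A + F - (B * Ri * Bᵀ) * (Φ1 P1m + Φ2 P1m))ᵀ * (Φ20 P0m)ᵀ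
        - (Φ20 P0m)ᵀ * (B0 * R0i * B0ᵀ) * Φ10 P0m - Γ0ᵀ * Q0))
      (ρ • Φ30 P0m - ((Φ20 P0m)ᵀ * F0 + F0ᵀ * Φ20 P0m
        + Φ30 P0m * (A + F - (B * Ri * Bᵀ) * (Φ1 P1m + Φ2 P1m))
        + (A + F - (B * Ri * Bᵀ) * (Φ1 P1m + Φ2 P1m))ᵀ * Φ30 P0m
        - (Φ20 P0m)ᵀ * (B0 * R0i * B0ᵀ) * Φ20 P0m + Γ0ᵀ * Q0 * Γ0)) := by
  rw [quad0]
  conv_lhs => rw [decomp0 P0m h0]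
  rw [A0big]
  simp only [fromBlocks_transpose, fromBlocks_multiply, fromBlocks_mul_fromRows,
    fromRows_mul, transpose_fromRows, fromRows_mul_fromCols, transpose_zero,
    mul_fromCols, fromCols_mul_fromBlocks, fromRows_fromCols_eq_fromBlocks,
    fromCols_fromRows_eq_fromBlocks,
    Matrix.mul_zero, Matrix.zero_mul, Matrix.mul_one, Matrix.one_mul, add_zero, zero_add,
    fromBlocks_add, fromBlocks_sub, fromBlocks_smul, Φ10_fb, Φ20_fb, Φ30_fb]
  rw [fromBlocks_inj]
  refine ⟨?_, ?_, ?_, ?_⟩ <;>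
  · rw [sub_right_inj]
    simp only [Matrix.transpose_sub, Matrix.transpose_add, Matrix.transpose_mul,
      Matrix.transpose_transpose, hRi, Matrix.mul_assoc, Matrix.mul_add, Matrix.add_mul,
      Matrix.mul_sub, Matrix.sub_mul]
    abel

set_option maxHeartbeats 1000000 in
lemma keyA (A0 A F0 F G : Matrix (Fin n) (Fin n) ℝ)
    (B0 B : Matrix (Fin n) (Fin n1) ℝ) (R0 : Matrix (Fin n1) (Fin n1) ℝ)
    (Ri : Matrix (Fin n1) (Fin n1) ℝ)
    (P0m : Matrix (Fin n ⊕ Fin n) (Fin n ⊕ Fin n) ℝ) (h0 : P0m.IsHermitian)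
    (P1m : Matrix (Fin n ⊕ (Fin n ⊕ Fin n)) (Fin n ⊕ (Fin n ⊕ Fin n)) ℝ) :
    Abig A0 F0 G A F (B * Ri * Bᵀ) B0 R0 P0m P1m =
      fromBlocks A (fromCols G F) 0
        (fromBlocks (A0 - B0 * R0⁻¹ * B0ᵀ * Φ10 P0m) (F0 - B0 * R0⁻¹ * B0ᵀ * Φ20 P0m)
          (G - B * Ri * Bᵀ * (Φa P1m)ᵀ) (A + F - B * Ri * Bᵀ * (Φ1 P1m + Φ2 P1m))) := by
  rw [Abig, A0big]
  conv_lhs => rw [decomp0 P0m h0]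
  simp only [fromRows_mul, transpose_fromRows, fromRows_mul_fromCols, transpose_zero,
    mul_fromCols, fromCols_mul_fromBlocks, fromRows_fromColumns_zero, sub_zero,
    fromCols_fromRows_eq_fromBlocks, fromRows_fromCols_eq_fromBlocks,
    Matrix.mul_zero, Matrix.zero_mul, Matrix.mul_one, Matrix.one_mul, add_zero, zero_add,
    fromBlocks_multiply, fromBlocks_sub, Φ10_fb, Φ20_fb, Φ30_fb]

set_option maxHeartbeats 2000000 in
lemma key1 (ρ : ℝ) (A0 A F0 F G Γ1 Γ2 Q : Matrix (Fin n) (Fin n) ℝ)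
    (B0 B : Matrix (Fin n) (Fin n1) ℝ) (R0 Ri : Matrix (Fin n1) (Fin n1) ℝ)
    (hRi : Riᵀ = Ri) (hR0i : (R0⁻¹)ᵀ = R0⁻¹)
    (P0m : Matrix (Fin n ⊕ Fin n) (Fin n ⊕ Fin n) ℝ) (h0 : P0m.IsHermitian)
    (P1m : Matrix (Fin n ⊕ (Fin n ⊕ Fin n)) (Fin n ⊕ (Fin n ⊕ Fin n)) ℝ)
    (h1 : P1m.IsHermitian) :
    ρ • P1m - (P1m * Abig A0 F0 G A F (B * Ri * Bᵀ) B0 R0 P0m P1m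
        + (Abig A0 F0 G A F (B * Ri * Bᵀ) B0 R0 P0m P1m)ᵀ * P1m
        - P1m * fromRows B (0 : Matrix (Fin n ⊕ Fin n) (Fin n1) ℝ) * Ri *
            (fromRows B (0 : Matrix (Fin n ⊕ Fin n) (Fin n1) ℝ))ᵀ * P1m
        + (fromCols 1 (fromCols (-Γ1) (-Γ2)))ᵀ * Q *
            fromCols 1 (fromCols (-Γ1) (-Γ2)))
    = fromBlocks
      (ρ • Φ1 P1m - (Φ1 P1m * A + Aᵀ * Φ1 P1m
        - Φ1 P1m * (B * Ri * Bᵀ) * Φ1 P1m + Q))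
      (fromCols
        (ρ • (Φa P1m)ᵀ - (Φ1 P1m * G + (Φa P1m)ᵀ * (A0 - B0 * R0⁻¹ * B0ᵀ * Φ10 P0m)
          + Φ2 P1m * (G - B * Ri * Bᵀ * (Φa P1m)ᵀ) + Aᵀ * (Φa P1m)ᵀ
          - Φ1 P1m * (B * Ri * Bᵀ) * (Φa P1m)ᵀ - Q * Γ1))
        (ρ • Φ2 P1m - (Φ1 P1m * F
          + (Φa P1m)ᵀ * (F0 - (B0 * R0⁻¹ * B0ᵀ) * Φ20 P0m)
          + Φ2 P1m * (A + F - (B * Ri * Bᵀ) * (Φ1 P1m + Φ2 P1m))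
          + Aᵀ * Φ2 P1m
          - Φ1 P1m * (B * Ri * Bᵀ) * Φ2 P1m - Q * Γ2)))
      (fromRows
        (ρ • Φa P1m - (Φa P1m * A + Gᵀ * Φ1 P1m
          + (A0ᵀ - Φ10 P0m * (B0 * R0⁻¹ * B0ᵀ)) * Φa P1m
          + (Gᵀ - Φa P1m * (B * Ri * Bᵀ)) * (Φ2 P1m)ᵀ
          - Φa P1m * (B * Ri * Bᵀ) * Φ1 P1m - Γ1ᵀ * Q))
        (ρ • (Φ2 P1m)ᵀ - ((Φ2 P1m)ᵀ * A + Fᵀ * Φ1 P1m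
          + (F0 - B0 * R0⁻¹ * B0ᵀ * Φ20 P0m)ᵀ * Φa P1m
          + (A + F - B * Ri * Bᵀ * (Φ1 P1m + Φ2 P1m))ᵀ * (Φ2 P1m)ᵀ
          - (Φ2 P1m)ᵀ * (B * Ri * Bᵀ) * Φ1 P1m - Γ2ᵀ * Q)))
      (fromBlocks
        (ρ • Φ0 P1m - (Φa P1m * G
          + Φ0 P1m * (A0 - (B0 * R0⁻¹ * B0ᵀ) * Φ10 P0m)
          + Φb P1m * (G - (B * Ri * Bᵀ) * (Φa P1m)ᵀ)
          + Gᵀ * (Φa P1m)ᵀ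
          + (A0ᵀ - Φ10 P0m * (B0 * R0⁻¹ * B0ᵀ)) * Φ0 P1m
          + (Gᵀ - Φa P1m * (B * Ri * Bᵀ)) * (Φb P1m)ᵀ
          - Φa P1m * (B * Ri * Bᵀ) * (Φa P1m)ᵀ + Γ1ᵀ * Q * Γ1))
        (ρ • Φb P1m - (Φa P1m * F
          + Φ0 P1m * (F0 - (B0 * R0⁻¹ * B0ᵀ) * Φ20 P0m)
          + Φb P1m * (A + F - (B * Ri * Bᵀ) * (Φ1 P1m + Φ2 P1m))
          + Gᵀ * Φ2 P1m
          + (A0ᵀ - Φ10 P0m * (B0 * R0⁻¹ * B0ᵀ)) * Φb P1m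
          + (Gᵀ - Φa P1m * (B * Ri * Bᵀ)) * Φ3 P1m
          - Φa P1m * (B * Ri * Bᵀ) * Φ2 P1m + Γ1ᵀ * Q * Γ2))
        (ρ • (Φb P1m)ᵀ - ((Φ2 P1m)ᵀ * G + (Φb P1m)ᵀ * (A0 - B0 * R0⁻¹ * B0ᵀ * Φ10 P0m)
          + Φ3 P1m * (G - B * Ri * Bᵀ * (Φa P1m)ᵀ) + Fᵀ * (Φa P1m)ᵀ
          + (F0 - B0 * R0⁻¹ * B0ᵀ * Φ20 P0m)ᵀ * Φ0 P1m
          + (A + F - B * Ri * Bᵀ * (Φ1 P1m + Φ2 P1m))ᵀ * (Φb P1m)ᵀ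
          - (Φ2 P1m)ᵀ * (B * Ri * Bᵀ) * (Φa P1m)ᵀ + Γ2ᵀ * Q * Γ1))
        (ρ • Φ3 P1m - ((Φ2 P1m)ᵀ * F + Fᵀ * Φ2 P1m
          + (Φb P1m)ᵀ * (F0 - (B0 * R0⁻¹ * B0ᵀ) * Φ20 P0m)
          + (F0ᵀ - (Φ20 P0m)ᵀ * (B0 * R0⁻¹ * B0ᵀ)) * Φb P1m
          + Φ3 P1m * (A + F - (B * Ri * Bᵀ) * (Φ1 P1m + Φ2 P1m))
          + (A + F - (B * Ri * Bᵀ) * (Φ1 P1m + Φ2 P1m))ᵀ * Φ3 P1m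
          - (Φ2 P1m)ᵀ * (B * Ri * Bᵀ) * Φ2 P1m + Γ2ᵀ * Q * Γ2))) := by
  have ha := sym10 h0
  rw [quad1, keyA A0 A F0 F G B0 B R0 Ri P0m h0 P1m]
  conv_lhs => rw [decomp1 P1m h1]
  simp only [fromBlocks_transpose, transpose_fromCols, transpose_fromRows,
    fromBlocks_multiply, fromBlocks_mul_fromRows, fromRows_mul, fromRows_mul_fromCols,
    mul_fromCols, fromCols_mul_fromBlocks, fromBlocks_mul_fromRows,
    fromRows_fromCols_eq_fromBlocks, fromCols_fromRows_eq_fromBlocks,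
    fromCols_mul_fromRows, transpose_zero,
    Matrix.mul_zero, Matrix.zero_mul, Matrix.mul_one, Matrix.one_mul, add_zero, zero_add,
    fromBlocks_add, fromBlocks_sub, fromBlocks_smul, fromColumns_add, fromColumns_sub,
    fromRows_add, fromRows_sub, smul_fromColumns, smul_fromRows, reshape1, reshape2,
    fromRows_fromColumns_zero, sub_zero,
    Φ10_fb, Φ20_fb, Φ30_fb, Φ1_fb, Φ2_fb, Φa_fb, Φ0_fb, Φb_fb, Φ3_fb]
  rw [fromBlocks_inj, fromCols_ext_iff, fromRows_ext_iff, fromBlocks_inj]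
  refine ⟨?_, ⟨?_, ?_⟩, ⟨?_, ?_⟩, ?_, ?_, ?_, ?_⟩ <;>
  · rw [sub_right_inj]
    simp only [Matrix.transpose_sub, Matrix.transpose_add, Matrix.transpose_mul,
      Matrix.transpose_transpose, hRi, hR0i, ha, Matrix.mul_assoc, Matrix.mul_add,
      Matrix.add_mul, Matrix.mul_sub, Matrix.sub_mul]
    try abel

end
end Hom

/-- For homogeneous minor players, writing the `2n×2n` and `3n×3n` NCE Riccati
equations (33) blockwise yields exactly the nine-equation system (37) with the
corresponding terminal conditions. -/
theorem stmt_12 {n n1 : ℕ} (hn : 1 ≤ n) (hn1 : 1 ≤ n1) (T ρ : ℝ) (hT : 0 < T) (hρ : 0 ≤ ρ)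
    (A0 A F0 F G : Matrix (Fin n) (Fin n) ℝ)
    (B0 B : Matrix (Fin n) (Fin n1) ℝ)
    (R0 R : Matrix (Fin n1) (Fin n1) ℝ) (hR0 : R0.PosDef) (hR : R.PosDef)
    (Q0 Q Q0f Qf : Matrix (Fin n) (Fin n) ℝ)
    (hQ0 : Q0.PosSemidef) (hQ : Q.PosSemidef) (hQ0f : Q0f.PosSemidef) (hQf : Qf.PosSemidef)
    (Γ0 Γ1 Γ2 Γ0f Γ1f Γ2f : Matrix (Fin n) (Fin n) ℝ)
    (P0 : ℝ → Matrix (Fin n ⊕ Fin n) (Fin n ⊕ Fin n) ℝ)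
    (P1 : ℝ → Matrix (Fin n ⊕ (Fin n ⊕ Fin n)) (Fin n ⊕ (Fin n ⊕ Fin n)) ℝ)
    (hP0symm : ∀ t, (P0 t).IsHermitian) (hP1symm : ∀ t, (P1 t).IsHermitian)
    -- the NCE Riccati system (33), with `M = BR⁻¹Bᵀ`, `M₀ = B₀R₀⁻¹B₀ᵀ`
    (hP0 : ∀ t ∈ Icc (0 : ℝ) T, ∀ a b, HasDerivAt (fun s => P0 s a b)
      ((ρ • P0 t - (P0 t * A0big A0 F0 G A F (B * R⁻¹ * Bᵀ) (P1 t)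
        + (A0big A0 F0 G A F (B * R⁻¹ * Bᵀ) (P1 t))ᵀ * P0 t
        - P0 t * fromRows B0 (0 : Matrix (Fin n) (Fin n1) ℝ) * R0⁻¹ *
            (fromRows B0 (0 : Matrix (Fin n) (Fin n1) ℝ))ᵀ * P0 t
        + (fromCols 1 (-Γ0))ᵀ * Q0 * fromCols 1 (-Γ0)
        : Matrix (Fin n ⊕ Fin n) (Fin n ⊕ Fin n) ℝ)) a b) t)
    (hP0T : P0 T = (fromCols 1 (-Γ0f))ᵀ * Q0f * fromCols 1 (-Γ0f))
    (hP1 : ∀ t ∈ Icc (0 : ℝ) T, ∀ a b, HasDerivAt (fun s => P1 s a b)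
      ((ρ • P1 t - (P1 t * Abig A0 F0 G A F (B * R⁻¹ * Bᵀ) B0 R0 (P0 t) (P1 t)
        + (Abig A0 F0 G A F (B * R⁻¹ * Bᵀ) B0 R0 (P0 t) (P1 t))ᵀ * P1 t
        - P1 t * fromRows B (0 : Matrix (Fin n ⊕ Fin n) (Fin n1) ℝ) * R⁻¹ *
            (fromRows B (0 : Matrix (Fin n ⊕ Fin n) (Fin n1) ℝ))ᵀ * P1 t
        + (fromCols 1 (fromCols (-Γ1) (-Γ2)))ᵀ * Q *
            fromCols 1 (fromCols (-Γ1) (-Γ2))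
        : Matrix (Fin n ⊕ (Fin n ⊕ Fin n)) (Fin n ⊕ (Fin n ⊕ Fin n)) ℝ)) a b) t)
    (hP1T : P1 T = (fromCols 1 (fromCols (-Γ1f) (-Γ2f)))ᵀ * Qf *
      fromCols 1 (fromCols (-Γ1f) (-Γ2f))) :
    -- the nine-block system (37)
    (let M : Matrix (Fin n) (Fin n) ℝ := B * R⁻¹ * Bᵀ
     let M0 : Matrix (Fin n) (Fin n) ℝ := B0 * R0⁻¹ * B0ᵀ
     (∀ t ∈ Icc (0 : ℝ) T, ∀ i j,
      -- Φ̇₁⁰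
      (HasDerivAt (fun s => Φ10 (P0 s) i j)
        ((ρ • Φ10 (P0 t) - (Φ10 (P0 t) * A0 + A0ᵀ * Φ10 (P0 t)
          + Φ20 (P0 t) * (G - M * (Φa (P1 t))ᵀ)
          + (Gᵀ - Φa (P1 t) * M) * (Φ20 (P0 t))ᵀ
          - Φ10 (P0 t) * M0 * Φ10 (P0 t) + Q0)) i j) t) ∧
      -- Φ̇₂⁰
      (HasDerivAt (fun s => Φ20 (P0 s) i j)
        ((ρ • Φ20 (P0 t) - (Φ10 (P0 t) * F0
          + Φ20 (P0 t) * (A + F - M * (Φ1 (P1 t) + Φ2 (P1 t)))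
          + A0ᵀ * Φ20 (P0 t)
          - (Φa (P1 t) * M - Gᵀ) * Φ30 (P0 t)
          - Φ10 (P0 t) * M0 * Φ20 (P0 t) - Q0 * Γ0)) i j) t) ∧
      -- Φ̇₃⁰
      (HasDerivAt (fun s => Φ30 (P0 s) i j)
        ((ρ • Φ30 (P0 t) - ((Φ20 (P0 t))ᵀ * F0 + F0ᵀ * Φ20 (P0 t)
          + Φ30 (P0 t) * (A + F - M * (Φ1 (P1 t) + Φ2 (P1 t)))
          + (A + F - M * (Φ1 (P1 t) + Φ2 (P1 t)))ᵀ * Φ30 (P0 t)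
          - (Φ20 (P0 t))ᵀ * M0 * Φ20 (P0 t) + Γ0ᵀ * Q0 * Γ0)) i j) t) ∧
      -- Φ̇₀
      (HasDerivAt (fun s => Φ0 (P1 s) i j)
        ((ρ • Φ0 (P1 t) - (Φa (P1 t) * G
          + Φ0 (P1 t) * (A0 - M0 * Φ10 (P0 t))
          + Φb (P1 t) * (G - M * (Φa (P1 t))ᵀ)
          + Gᵀ * (Φa (P1 t))ᵀ
          + (A0ᵀ - Φ10 (P0 t) * M0) * Φ0 (P1 t)
          + (Gᵀ - Φa (P1 t) * M) * (Φb (P1 t))ᵀ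
          - Φa (P1 t) * M * (Φa (P1 t))ᵀ + Γ1ᵀ * Q * Γ1)) i j) t) ∧
      -- Φ̇₁
      (HasDerivAt (fun s => Φ1 (P1 s) i j)
        ((ρ • Φ1 (P1 t) - (Φ1 (P1 t) * A + Aᵀ * Φ1 (P1 t)
          - Φ1 (P1 t) * M * Φ1 (P1 t) + Q)) i j) t) ∧
      -- Φ̇₂
      (HasDerivAt (fun s => Φ2 (P1 s) i j)
        ((ρ • Φ2 (P1 t) - (Φ1 (P1 t) * F
          + (Φa (P1 t))ᵀ * (F0 - M0 * Φ20 (P0 t))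
          + Φ2 (P1 t) * (A + F - M * (Φ1 (P1 t) + Φ2 (P1 t)))
          + Aᵀ * Φ2 (P1 t)
          - Φ1 (P1 t) * M * Φ2 (P1 t) - Q * Γ2)) i j) t) ∧
      -- Φ̇₃
      (HasDerivAt (fun s => Φ3 (P1 s) i j)
        ((ρ • Φ3 (P1 t) - ((Φ2 (P1 t))ᵀ * F + Fᵀ * Φ2 (P1 t)
          + (Φb (P1 t))ᵀ * (F0 - M0 * Φ20 (P0 t))
          + (F0ᵀ - (Φ20 (P0 t))ᵀ * M0) * Φb (P1 t)
          + Φ3 (P1 t) * (A + F - M * (Φ1 (P1 t) + Φ2 (P1 t)))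
          + (A + F - M * (Φ1 (P1 t) + Φ2 (P1 t)))ᵀ * Φ3 (P1 t)
          - (Φ2 (P1 t))ᵀ * M * Φ2 (P1 t) + Γ2ᵀ * Q * Γ2)) i j) t) ∧
      -- Φ̇ₐ
      (HasDerivAt (fun s => Φa (P1 s) i j)
        ((ρ • Φa (P1 t) - (Φa (P1 t) * A + Gᵀ * Φ1 (P1 t)
          + (A0ᵀ - Φ10 (P0 t) * M0) * Φa (P1 t)
          + (Gᵀ - Φa (P1 t) * M) * (Φ2 (P1 t))ᵀ
          - Φa (P1 t) * M * Φ1 (P1 t) - Γ1ᵀ * Q)) i j) t) ∧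
      -- Φ̇_b
      (HasDerivAt (fun s => Φb (P1 s) i j)
        ((ρ • Φb (P1 t) - (Φa (P1 t) * F
          + Φ0 (P1 t) * (F0 - M0 * Φ20 (P0 t))
          + Φb (P1 t) * (A + F - M * (Φ1 (P1 t) + Φ2 (P1 t)))
          + Gᵀ * Φ2 (P1 t)
          + (A0ᵀ - Φ10 (P0 t) * M0) * Φb (P1 t)
          + (Gᵀ - Φa (P1 t) * M) * Φ3 (P1 t)
          - Φa (P1 t) * M * Φ2 (P1 t) + Γ1ᵀ * Q * Γ2)) i j) t)) ∧
     Φ10 (P0 T) = Q0f ∧ Φ20 (P0 T) = -(Q0f * Γ0f) ∧ Φ30 (P0 T) = Γ0fᵀ * Q0f * Γ0f ∧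
     Φ0 (P1 T) = Γ1fᵀ * Qf * Γ1f ∧ Φ1 (P1 T) = Qf ∧ Φ2 (P1 T) = -(Qf * Γ2f) ∧
     Φ3 (P1 T) = Γ2fᵀ * Qf * Γ2f ∧ Φa (P1 T) = -(Γ1fᵀ * Qf) ∧
     Φb (P1 T) = Γ1fᵀ * Qf * Γ2f) := by
  have hRi : (R⁻¹)ᵀ = R⁻¹ := by
    rw [Matrix.transpose_nonsing_inv, herm_t hR.isHermitian]
  have hR0i : (R0⁻¹)ᵀ = R0⁻¹ := by
    rw [Matrix.transpose_nonsing_inv, herm_t hR0.isHermitian]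
  intro M M0
  refine ⟨?_, ?_, ?_, ?_, ?_, ?_, ?_, ?_, ?_, ?_⟩
  · intro t ht i j
    have h0 := hP0 t ht
    have h1 := hP1 t ht
    have e0 := key0 ρ A0 A F0 F G Γ0 Q0 B0 B R0⁻¹ R⁻¹ hRi (P0 t) (hP0symm t) (P1 t)
    have e1 := key1 ρ A0 A F0 F G Γ1 Γ2 Q B0 B R0 R⁻¹ hRi hR0i (P0 t) (hP0symm t)
      (P1 t) (hP1symm t)
    refine ⟨?_, ?_, ?_, ?_, ?_, ?_, ?_, ?_, ?_⟩
    · have h := h0 (Sum.inl i) (Sum.inl j); rw [e0] at h; exact h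
    · have h := h0 (Sum.inl i) (Sum.inr j); rw [e0] at h; exact h
    · have h := h0 (Sum.inr i) (Sum.inr j); rw [e0] at h; exact h
    · have h := h1 (Sum.inr (Sum.inl i)) (Sum.inr (Sum.inl j)); rw [e1] at h; exact h
    · have h := h1 (Sum.inl i) (Sum.inl j); rw [e1] at h; exact h
    · have h := h1 (Sum.inl i) (Sum.inr (Sum.inr j)); rw [e1] at h; exact h
    · have h := h1 (Sum.inr (Sum.inr i)) (Sum.inr (Sum.inr j)); rw [e1] at h; exact h
    · have h := h1 (Sum.inr (Sum.inl i)) (Sum.inl j); rw [e1] at h; exact h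
    · have h := h1 (Sum.inr (Sum.inl i)) (Sum.inr (Sum.inr j)); rw [e1] at h; exact h
  · rw [hP0T, quad0]; rfl
  · rw [hP0T, quad0]; rfl
  · rw [hP0T, quad0]; rfl
  · rw [hP1T, quad1]; rfl
  · rw [hP1T, quad1]; rfl
  · rw [hP1T, quad1]; rfl
  · rw [hP1T, quad1]; rfl
  · rw [hP1T, quad1]; rfl
  · rw [hP1T, quad1]; rfl
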